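/- arXiv:2102.05367 — 4 statements merged into one kernel-verified Lean document; each statement's English description precedes it below -/
import Mathlib

section
/- Let B ∈ ℂ^{n×n} have n distinct (simple) eigenvalues, let κ* be the maximum of the condition numbers κ(λ) over all eigenvalues λ of B, let 0 < L₀ < L₁, let N_str be the number of eigenvalues λ of B with L₀ < Re λ < L₁, and let δ > 0 satisfy 2 δ n κ* (N_str + 1) < L₁ − L₀. Then there exists L ∈ (L₀, L₁) such that the vertical line {z ∈ ℂ : Re z = L} does not intersect the δ-pseudospectrum Λ_δ(B); that is, every z ∈ ℂ with Re z = L is not an eigenvalue of B and satisfies ‖(zI − B)⁻¹‖₂ < δ⁻¹. -/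
open Matrix

/-- The matrix operator norm induced by the Euclidean norm. -/
noncomputable def matNorm {n : ℕ} (B : Matrix (Fin n) (Fin n) ℂ) : ℝ :=
  ‖(Matrix.toEuclideanCLM (𝕜 := ℂ) B : EuclideanSpace ℂ (Fin n) →L[ℂ] EuclideanSpace ℂ (Fin n))‖

/-- Apply a matrix to a vector of `EuclideanSpace ℂ (Fin n)`. -/
noncomputable def matApply {n : ℕ} (B : Matrix (Fin n) (Fin n) ℂ)
    (x : EuclideanSpace ℂ (Fin n)) : EuclideanSpace ℂ (Fin n) :=
  (Matrix.toEuclideanCLM (𝕜 := ℂ) B : EuclideanSpace ℂ (Fin n) →L[ℂ] EuclideanSpace ℂ (Fin n)) x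


open MeasureTheory

lemma pigeon (Λ : Finset ℂ) (L₀ L₁ r : ℝ) (hr : 0 ≤ r) (h01 : L₀ < L₁)
    (h : 2 * r * ((Λ.filter (fun z => L₀ < z.re ∧ z.re < L₁)).card + 1) < L₁ - L₀) :
    ∃ L ∈ Set.Ioo L₀ L₁, ∀ μ ∈ Λ, r < |L - μ.re| := by
  set N := (Λ.filter (fun z => L₀ < z.re ∧ z.re < L₁)).card with hN
  by_contra hcon
  push_neg at hcon
  have hsub : Set.Ioo L₀ L₁ ⊆
      Set.Ioc L₀ (L₀ + r) ∪ Set.Ico (L₁ - r) L₁ ∪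
      ⋃ μ ∈ (Λ.filter (fun z => L₀ < z.re ∧ z.re < L₁)), Set.Icc (μ.re - r) (μ.re + r) := by
    intro L hL
    obtain ⟨μ, hμΛ, hμr⟩ := hcon L hL
    have habs : |L - μ.re| ≤ r := hμr
    rw [abs_le] at habs
    rcases lt_or_ge L₀ μ.re with h1 | h1
    · rcases lt_or_ge μ.re L₁ with h2 | h2
      · right
        refine Set.mem_biUnion (Finset.mem_filter.2 ⟨hμΛ, h1, h2⟩) ?_
        constructor <;> linarith [habs.1, habs.2]
      · left; right
        exact ⟨by linarith [habs.1], hL.2⟩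
    · left; left
      exact ⟨hL.1, by linarith [habs.2]⟩
  have hv1 : volume (Set.Ioo L₀ L₁) = ENNReal.ofReal (L₁ - L₀) := Real.volume_Ioo
  have hv2 : volume (Set.Ioo L₀ L₁) ≤ ENNReal.ofReal (2 * r * (N + 1)) := by
    refine (measure_mono hsub).trans ?_
    refine le_trans (measure_union_le _ _) ?_
    refine le_trans (add_le_add (measure_union_le _ _)
      (measure_biUnion_finset_le _ _)) ?_
    have h1 : volume (Set.Ioc L₀ (L₀ + r)) = ENNReal.ofReal r := by
      rw [Real.volume_Ioc]; congr 1; ring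
    have h2 : volume (Set.Ico (L₁ - r) L₁) = ENNReal.ofReal r := by
      rw [Real.volume_Ico]; congr 1; ring
    have h3 : ∀ μ ∈ (Λ.filter (fun z => L₀ < z.re ∧ z.re < L₁)),
        volume (Set.Icc (μ.re - r) (μ.re + r)) = ENNReal.ofReal (2 * r) := by
      intro μ _
      rw [Real.volume_Icc]; congr 1; ring
    rw [h1, h2, Finset.sum_congr rfl h3, Finset.sum_const, ← hN, nsmul_eq_mul,
      ← ENNReal.ofReal_natCast N, ← ENNReal.ofReal_mul (Nat.cast_nonneg N),
      ← ENNReal.ofReal_add hr hr, ← ENNReal.ofReal_add (by positivity) (by positivity)]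
    exact ENNReal.ofReal_le_ofReal (by ring_nf; linarith)
  rw [hv1] at hv2
  have := (ENNReal.ofReal_le_ofReal_iff (by positivity)).1 hv2
  linarith



open ContinuousLinearMap in
lemma resolvent_inverse {n : ℕ} (T : EuclideanSpace ℂ (Fin n) →L[ℂ] EuclideanSpace ℂ (Fin n))
    (lam : Fin n → ℂ) (hinj : Function.Injective lam)
    (u v : Fin n → EuclideanSpace ℂ (Fin n))
    (hu0 : ∀ i, u i ≠ 0) (hv0 : ∀ i, v i ≠ 0)
    (hu : ∀ i, T (u i) = lam i • u i)
    (hv : ∀ i, ContinuousLinearMap.adjoint T (v i) = (starRingEnd ℂ (lam i)) • v i)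
    (hn : 0 < n) :
    (∀ i, (inner ℂ (v i) (u i) : ℂ) ≠ 0) ∧
    ∀ z : ℂ, (∀ i, z ≠ lam i) →
    ∃ M : EuclideanSpace ℂ (Fin n) →L[ℂ] EuclideanSpace ℂ (Fin n),
      M ∘L (z • 1 - T) = 1 ∧
      ‖M‖ ≤ ∑ i, (‖u i‖ * ‖v i‖ / ‖(inner ℂ (v i) (u i) : ℂ)‖) / ‖z - lam i‖ := by
  have horth : ∀ i j, i ≠ j → (inner ℂ (v i) (u j) : ℂ) = 0 := by
    intro i j hij
    have h1 : (inner ℂ (v i) (T (u j)) : ℂ) = lam j * inner ℂ (v i) (u j) := by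
      rw [hu j, inner_smul_right]
    have h2 : (inner ℂ (v i) (T (u j)) : ℂ) = lam i * inner ℂ (v i) (u j) := by
      rw [← ContinuousLinearMap.adjoint_inner_left, hv i, inner_smul_left]
      simp
    have h3 : (lam j - lam i) * inner ℂ (v i) (u j) = 0 := by
      rw [sub_mul, ← h1, ← h2, sub_self]
    rcases mul_eq_zero.1 h3 with h | h
    · exact absurd (hinj (sub_eq_zero.1 h)) (Ne.symm hij)
    · exact h
  haveI : Nonempty (Fin n) := ⟨⟨0, hn⟩⟩
  have hufin : LinearIndependent ℂ u := by
    apply Module.End.eigenvectors_linearIndependent'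
      (f := (T : EuclideanSpace ℂ (Fin n) →ₗ[ℂ] EuclideanSpace ℂ (Fin n))) (μ := lam) hinj
    intro i
    refine ⟨Module.End.mem_eigenspace_iff.2 ?_, hu0 i⟩
    simpa using hu i
  have hcard : Fintype.card (Fin n) = Module.finrank ℂ (EuclideanSpace ℂ (Fin n)) := by simp
  let b := basisOfLinearIndependentOfCardEqFinrank hufin hcard
  have hb : ∀ i, b i = u i := fun i => by
    simp [b, coe_basisOfLinearIndependentOfCardEqFinrank]
  have hvu : ∀ i, (inner ℂ (v i) (u i) : ℂ) ≠ 0 := by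
    intro i h0
    have hall : ∀ j, (inner ℂ (v i) (u j) : ℂ) = 0 := by
      intro j
      rcases eq_or_ne i j with rfl | hij
      · exact h0
      · exact horth i j hij
    have hx : ∀ x : EuclideanSpace ℂ (Fin n), (inner ℂ (v i) x : ℂ) = 0 := by
      intro x
      have hrep := b.sum_repr x
      rw [← hrep, inner_sum]
      simp [hb, inner_smul_right, hall]
    exact hv0 i (inner_self_eq_zero.1 (hx (v i)))
  refine ⟨hvu, ?_⟩
  intro z hz
  set c : Fin n → ℂ := fun i => (z - lam i)⁻¹ * (inner ℂ (v i) (u i) : ℂ)⁻¹ with hc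
  set M : EuclideanSpace ℂ (Fin n) →L[ℂ] EuclideanSpace ℂ (Fin n) :=
    ∑ i, c i • ((innerSL ℂ (v i)).smulRight (u i)) with hM
  have hMu : ∀ j, M (u j) = (z - lam j)⁻¹ • u j := by
    intro j
    rw [hM]
    simp only [ContinuousLinearMap.sum_apply, ContinuousLinearMap.smul_apply,
      ContinuousLinearMap.smulRight_apply, innerSL_apply_apply]
    rw [Finset.sum_eq_single j]
    · rw [smul_smul, hc, mul_assoc, inv_mul_cancel₀ (hvu j), mul_one]
    · intro i _ hij
      rw [horth i j hij, zero_smul, smul_zero]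
    · intro h; exact absurd (Finset.mem_univ j) h
  refine ⟨M, ?_, ?_⟩
  · apply ContinuousLinearMap.coe_injective
    apply Module.Basis.ext b
    intro j
    rw [hb j]
    have hA : (z • (1 : EuclideanSpace ℂ (Fin n) →L[ℂ] EuclideanSpace ℂ (Fin n)) - T) (u j)
        = (z - lam j) • u j := by
      rw [ContinuousLinearMap.sub_apply, ContinuousLinearMap.smul_apply,
        ContinuousLinearMap.one_apply, hu j, sub_smul]
    have : (M ∘L (z • 1 - T)) (u j) = u j := by
      rw [ContinuousLinearMap.comp_apply, hA, _root_.map_smul, hMu j, smul_smul,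
        mul_inv_cancel₀ (sub_ne_zero.2 (hz j)), one_smul]
    simpa using this
  · rw [hM]
    refine (norm_sum_le _ _).trans (Finset.sum_le_sum fun i _ => ?_)
    rw [norm_smul (c i) (((innerSL ℂ) (v i)).smulRight (u i)), ContinuousLinearMap.norm_smulRight_apply, innerSL_apply_norm, hc]
    rw [norm_mul, norm_inv, norm_inv]
    rw [div_div, div_eq_mul_inv, mul_inv]
    ring_nf
    exact le_refl _


theorem exists_line_avoiding_pseudospectrum {n : ℕ} (B : Matrix (Fin n) (Fin n) ℂ)
    -- `Λ` is the set of eigenvalues of `B`; `B` has `n` distinct (simple) eigenvalues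
    (Λ : Finset ℂ) (hΛ : ∀ z : ℂ, z ∈ Λ ↔ z ∈ spectrum ℂ B)
    (hsimple : Λ.card = n)
    -- `κ` assigns to each eigenvalue its condition number `‖u‖‖v‖/|⟨v,u⟩|`
    (κ : ℂ → ℝ)
    (hκ : ∀ μ ∈ Λ, ∃ u v : EuclideanSpace ℂ (Fin n), u ≠ 0 ∧ v ≠ 0 ∧
      matApply B u = μ • u ∧ matApply Bᴴ v = (starRingEnd ℂ μ) • v ∧
      κ μ = ‖u‖ * ‖v‖ / ‖(inner ℂ v u : ℂ)‖)
    -- `κstar` is the maximal eigenvalue condition number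
    (κstar : ℝ) (hκstar : IsGreatest (κ '' (Λ : Set ℂ)) κstar)
    (L₀ L₁ : ℝ) (hL₀ : 0 < L₀) (hL₀₁ : L₀ < L₁)
    -- `Nstr` is the number of eigenvalues in the strip `L₀ < Re z < L₁`
    (Nstr : ℕ) (hNstr : Nstr = (Λ.filter (fun z => L₀ < z.re ∧ z.re < L₁)).card)
    (δ : ℝ) (hδ : 0 < δ)
    (hδsmall : 2 * δ * n * κstar * (Nstr + 1) < L₁ - L₀) :
    ∃ L ∈ Set.Ioo L₀ L₁, ∀ z : ℂ, z.re = L →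
      z ∉ spectrum ℂ B ∧
      matNorm ((z • (1 : Matrix (Fin n) (Fin n) ℂ) - B)⁻¹) < δ⁻¹ := by
  classical
  -- Λ is nonempty, so n ≥ 1
  obtain ⟨μ₀, hμ₀Λ, hμ₀κ⟩ := hκstar.1
  have hΛne : Λ.Nonempty := ⟨μ₀, hμ₀Λ⟩
  have hn : 0 < n := hsimple ▸ Finset.card_pos.2 hΛne
  -- enumerate the eigenvalues
  set lam : Fin n → ℂ := fun i => (Λ.equivFin.symm (Fin.cast hsimple.symm i) : ℂ) with hlam
  have hlamΛ : ∀ i, lam i ∈ Λ := fun i => Finset.coe_mem _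
  have hlaminj : Function.Injective lam := by
    intro i j h
    have h1 := Λ.equivFin.symm.injective (Subtype.coe_injective h)
    exact Fin.val_injective (by simpa using congrArg Fin.val h1)
  -- choose eigenvectors
  have H : ∀ i : Fin n, ∃ u v : EuclideanSpace ℂ (Fin n), u ≠ 0 ∧ v ≠ 0 ∧
      matApply B u = lam i • u ∧ matApply Bᴴ v = (starRingEnd ℂ (lam i)) • v ∧
      κ (lam i) = ‖u‖ * ‖v‖ / ‖(inner ℂ v u : ℂ)‖ := fun i => hκ (lam i) (hlamΛ i)
  choose u v hu0 hv0 hueq hveq hκeq using H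
  -- the CLM version of B
  set T : EuclideanSpace ℂ (Fin n) →L[ℂ] EuclideanSpace ℂ (Fin n) :=
    Matrix.toEuclideanCLM (𝕜 := ℂ) B with hT
  have hadj : ContinuousLinearMap.adjoint T = Matrix.toEuclideanCLM (𝕜 := ℂ) Bᴴ := by
    rw [← ContinuousLinearMap.star_eq_adjoint, hT, ← Matrix.star_eq_conjTranspose B]
    exact (map_star (Matrix.toEuclideanCLM (𝕜 := ℂ)) B).symm
  obtain ⟨hvu, hres⟩ := resolvent_inverse T lam hlaminj u v hu0 hv0
    (fun i => hueq i) (fun i => by rw [hadj]; exact hveq i) hn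
  -- κstar is positive
  have hκpos : ∀ i, 0 < κ (lam i) := by
    intro i
    rw [hκeq i]
    have h1 : 0 < ‖u i‖ := norm_pos_iff.2 (hu0 i)
    have h2 : 0 < ‖v i‖ := norm_pos_iff.2 (hv0 i)
    have h3 : 0 < ‖(inner ℂ (v i) (u i) : ℂ)‖ := norm_pos_iff.2 (hvu i)
    positivity
  have hκstarpos : 0 < κstar := lt_of_lt_of_le (hκpos ⟨0, hn⟩)
    (hκstar.2 ⟨lam ⟨0, hn⟩, hlamΛ _, rfl⟩)
  -- pick the good line
  set r : ℝ := δ * n * κstar with hr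
  have hrpos : 0 < r := by
    have : (0:ℝ) < n := Nat.cast_pos.2 hn
    positivity
  obtain ⟨L, hLmem, hLfar⟩ := pigeon Λ L₀ L₁ r hrpos.le hL₀₁ (by
    rw [← hNstr]
    calc 2 * r * (Nstr + 1) = 2 * δ * n * κstar * (Nstr + 1) := by rw [hr]; ring
      _ < L₁ - L₀ := hδsmall)
  refine ⟨L, hLmem, ?_⟩
  intro z hzre
  -- distance from z to every eigenvalue exceeds r
  have hfar : ∀ μ ∈ Λ, r < ‖z - μ‖ := by
    intro μ hμ
    refine lt_of_lt_of_le (hLfar μ hμ) ?_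
    have h0 : |L - μ.re| = |(z - μ).re| := by rw [Complex.sub_re, hzre]
    rw [h0]
    exact Complex.abs_re_le_norm _
  have hzne : ∀ i, z ≠ lam i := by
    intro i h
    have := hfar (lam i) (hlamΛ i)
    rw [← h, sub_self, norm_zero] at this
    linarith
  obtain ⟨M, hMA, hMnorm⟩ := hres z hzne
  -- transfer to matrices
  set A : Matrix (Fin n) (Fin n) ℂ := z • 1 - B with hA
  have hTA : Matrix.toEuclideanCLM (𝕜 := ℂ) A = z • 1 - T := by
    rw [hA, map_sub, _root_.map_smul, _root_.map_one, hT]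
  have hCA : (Matrix.toEuclideanCLM (𝕜 := ℂ) (n := Fin n)).symm M * A = 1 := by
    have h1 : Matrix.toEuclideanCLM (𝕜 := ℂ)
        ((Matrix.toEuclideanCLM (𝕜 := ℂ) (n := Fin n)).symm M * A) = 1 := by
      rw [_root_.map_mul, StarAlgEquiv.apply_symm_apply, hTA]
      exact hMA
    have h2 := congrArg (Matrix.toEuclideanCLM (𝕜 := ℂ) (n := Fin n)).symm h1
    simpa using h2
  have hAC : A * (Matrix.toEuclideanCLM (𝕜 := ℂ) (n := Fin n)).symm M = 1 := mul_eq_one_comm.2 hCA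
  have hAinv : A⁻¹ = (Matrix.toEuclideanCLM (𝕜 := ℂ) (n := Fin n)).symm M := Matrix.inv_eq_left_inv hCA
  have hunit : IsUnit A := ⟨⟨A, (Matrix.toEuclideanCLM (𝕜 := ℂ) (n := Fin n)).symm M, hAC, hCA⟩, rfl⟩
  constructor
  · rw [spectrum.notMem_iff]
    have : algebraMap ℂ (Matrix (Fin n) (Fin n) ℂ) z - B = A := by
      rw [hA, Algebra.algebraMap_eq_smul_one]
    rwa [this]
  · have hmn : matNorm A⁻¹ = ‖M‖ := by
      rw [matNorm, hAinv, StarAlgEquiv.apply_symm_apply]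
    rw [hmn]
    refine lt_of_le_of_lt hMnorm ?_
    have hterm : ∀ i ∈ Finset.univ, (‖u i‖ * ‖v i‖ / ‖(inner ℂ (v i) (u i) : ℂ)‖) / ‖z - lam i‖
        < κstar / r := by
      intro i _
      have hd : r < ‖z - lam i‖ := hfar (lam i) (hlamΛ i)
      have hκle : κ (lam i) ≤ κstar := hκstar.2 ⟨lam i, hlamΛ i, rfl⟩
      calc (‖u i‖ * ‖v i‖ / ‖(inner ℂ (v i) (u i) : ℂ)‖) / ‖z - lam i‖
          = κ (lam i) / ‖z - lam i‖ := by rw [hκeq i]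
        _ ≤ κstar / ‖z - lam i‖ :=
            (div_le_div_iff_of_pos_right (lt_trans hrpos hd)).2 hκle
        _ < κstar / r := div_lt_div_of_pos_left hκstarpos hrpos hd
    calc (∑ i, (‖u i‖ * ‖v i‖ / ‖(inner ℂ (v i) (u i) : ℂ)‖) / ‖z - lam i‖)
        < ∑ _i : Fin n, κstar / r := Finset.sum_lt_sum_of_nonempty ⟨⟨0, hn⟩, Finset.mem_univ _⟩ hterm
      _ = n * (κstar / r) := by rw [Finset.sum_const, Finset.card_univ, Fintype.card_fin, nsmul_eq_mul]
      _ = δ⁻¹ := by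
          rw [hr]
          field_simp
end

section
/- In the Galerkin setting below, the following two-sided bound holds: cond(M)^{−1/2} · ‖T̃‖ ≤ ‖M⁻¹ A‖₂ ≤ cond(M)^{1/2} · ‖T̃‖. -/
/-- The Galerkin truncation `T̃ := (P ∘ T)|_V : V → V`, where `V = span{φ_1,…,φ_n}` and
`P` is the orthogonal projection onto `V`. -/
noncomputable def galerkinTrunc {H : Type*} [NormedAddCommGroup H] [InnerProductSpace ℂ H]
    {n : ℕ} (T : H →L[ℂ] H) (φ : Fin n → H) :
    Submodule.span ℂ (Set.range φ) →L[ℂ] Submodule.span ℂ (Set.range φ) :=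
  haveI : FiniteDimensional ℂ (Submodule.span ℂ (Set.range φ)) :=
    FiniteDimensional.span_of_finite ℂ (Set.finite_range φ)
  (Submodule.orthogonalProjection (Submodule.span ℂ (Set.range φ))).comp
    (T.comp (Submodule.span ℂ (Set.range φ)).subtypeL)

set_option maxHeartbeats 2000000 in
theorem galerkin_matrix_norm_two_sided_bound
    {H : Type*} [NormedAddCommGroup H] [InnerProductSpace ℂ H] [CompleteSpace H]
    {n : ℕ} (T : H →L[ℂ] H) (φ : Fin n → H) (hφ : LinearIndependent ℂ φ)
    -- the mass (Gram) matrix `M` and the Galerkin matrix `A`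
    (M A : Matrix (Fin n) (Fin n) ℂ)
    (hM : ∀ i j, M i j = (inner ℂ (φ i) (φ j) : ℂ))
    (hA : ∀ i j, A i j = (inner ℂ (φ i) (T (φ j)) : ℂ)) :
    (Real.sqrt (matNorm M * matNorm M⁻¹))⁻¹ * ‖galerkinTrunc T φ‖ ≤ matNorm (M⁻¹ * A) ∧
    matNorm (M⁻¹ * A) ≤ Real.sqrt (matNorm M * matNorm M⁻¹) * ‖galerkinTrunc T φ‖ := by
  classical
  haveI hfin : FiniteDimensional ℂ (Submodule.span ℂ (Set.range φ)) :=
    FiniteDimensional.span_of_finite ℂ (Set.finite_range φ)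
  set V := Submodule.span ℂ (Set.range φ) with hVdef
  set e : (Fin n → ℂ) → EuclideanSpace ℂ (Fin n) :=
    fun v => (WithLp.equiv 2 (Fin n → ℂ)).symm v with he
  set s : EuclideanSpace ℂ (Fin n) → H := fun c => ∑ i, c i • φ i with hs
  have hmem : ∀ c, s c ∈ V := fun c =>
    Submodule.sum_mem _ fun i _ => Submodule.smul_mem _ _ (Submodule.subset_span ⟨i, rfl⟩)
  -- basic inner ℂ product identities
  have h1 : ∀ (c : EuclideanSpace ℂ (Fin n)) i, (inner ℂ (φ i) (s c) : ℂ) = M.mulVec c i := by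
    intro c i
    simp only [hs, inner_sum, inner_smul_right, Matrix.mulVec, dotProduct]
    exact Finset.sum_congr rfl fun j _ => by rw [hM]; ring
  have h2 : ∀ d c : EuclideanSpace ℂ (Fin n),
      (inner ℂ (s d) (s c) : ℂ) = inner ℂ d (e (M.mulVec c)) := by
    intro d c
    have : (inner ℂ (s d) (s c) : ℂ) = ∑ i, (starRingEnd ℂ) (d i) * (inner ℂ (φ i) (s c) : ℂ) := by
      rw [hs, sum_inner]
      exact Finset.sum_congr rfl fun i _ => by rw [inner_smul_left]
    rw [this]
    simp only [PiLp.inner_apply, RCLike.inner_apply]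
    exact Finset.sum_congr rfl fun i _ => by rw [h1]; exact mul_comm _ _
  -- Cauchy-Schwarz on the real part
  have hre : ∀ (x y : H), RCLike.re (inner ℂ x y : ℂ) ≤ ‖x‖ * ‖y‖ := fun x y =>
    (RCLike.re_le_norm _).trans (norm_inner_le_norm x y)
  have hreE : ∀ (x y : EuclideanSpace ℂ (Fin n)),
      RCLike.re (inner ℂ x y : ℂ) ≤ ‖x‖ * ‖y‖ := fun x y =>
    (RCLike.re_le_norm _).trans (norm_inner_le_norm x y)
  -- norms of matrix-vector products
  have hMv : ∀ (N : Matrix (Fin n) (Fin n) ℂ) (c : EuclideanSpace ℂ (Fin n)),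
      ‖e (N.mulVec c)‖ ≤ matNorm N * ‖c‖ := fun N c =>
    (Matrix.toEuclideanCLM (𝕜 := ℂ) N :
      EuclideanSpace ℂ (Fin n) →L[ℂ] EuclideanSpace ℂ (Fin n)).le_opNorm c
  -- ‖s c‖ ^ 2 = re ⟪c, M c⟫
  have hnorm : ∀ c : EuclideanSpace ℂ (Fin n),
      ‖s c‖ ^ 2 = RCLike.re (inner ℂ c (e (M.mulVec c)) : ℂ) := fun c => by
    rw [← h2 c c, inner_self_eq_norm_sq]
  set a := Real.sqrt (matNorm M) with ha
  set b := Real.sqrt (matNorm M⁻¹) with hb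
  have ha0 : 0 ≤ a := Real.sqrt_nonneg _
  have hb0 : 0 ≤ b := Real.sqrt_nonneg _
  have hMn : (0:ℝ) ≤ matNorm M := norm_nonneg _
  have hMin : (0:ℝ) ≤ matNorm M⁻¹ := norm_nonneg _
  -- L1 : ‖s c‖ ≤ a * ‖c‖
  have L1 : ∀ c : EuclideanSpace ℂ (Fin n), ‖s c‖ ≤ a * ‖c‖ := by
    intro c
    have hsq : ‖s c‖ ^ 2 ≤ (a * ‖c‖) ^ 2 := by
      rw [hnorm c, mul_pow, ha, Real.sq_sqrt hMn]
      calc RCLike.re (inner ℂ c (e (M.mulVec c)) : ℂ) ≤ ‖c‖ * ‖e (M.mulVec c)‖ := hreE _ _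
        _ ≤ ‖c‖ * (matNorm M * ‖c‖) := mul_le_mul_of_nonneg_left (hMv M c) (norm_nonneg c)
        _ = matNorm M * ‖c‖ ^ 2 := by ring
    have := Real.sqrt_le_sqrt hsq
    rwa [Real.sqrt_sq (norm_nonneg _), Real.sqrt_sq (by positivity)] at this
  -- invertibility of M
  have hdet : IsUnit M.det := by
    rw [isUnit_iff_ne_zero]
    intro h0
    obtain ⟨v, hv, hMv0⟩ := (Matrix.exists_mulVec_eq_zero_iff).mpr h0
    have hsv : ‖s (e v)‖ ^ 2 = 0 := by
      rw [hnorm (e v)]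
      have : M.mulVec (e v) = 0 := hMv0
      rw [this]
      have : e (0 : Fin n → ℂ) = 0 := rfl
      rw [this, inner_zero_right]
      simp
    have hsv0 : s (e v) = 0 := by
      have := pow_eq_zero_iff (n := 2) (by norm_num) |>.mp hsv
      exact norm_eq_zero.mp this
    have : ∀ i, (e v) i = 0 := by
      have hli := linearIndependent_iff'.mp hφ Finset.univ (fun i => (e v) i) ?_
      · exact fun i => hli i (Finset.mem_univ i)
      · exact hsv0
    exact hv (funext fun i => this i)
  have hMM : M * M⁻¹ = 1 := Matrix.mul_nonsing_inv M hdet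
  have hMMA : M * (M⁻¹ * A) = A := by rw [← mul_assoc, hMM, one_mul]
  have hMMc : ∀ c : EuclideanSpace ℂ (Fin n), M.mulVec (e (M⁻¹.mulVec c)) = c := by
    intro c
    show M.mulVec (M⁻¹.mulVec c) = c
    rw [Matrix.mulVec_mulVec, hMM, Matrix.one_mulVec]
  -- auxiliary: ‖s (M⁻¹ c)‖ ≤ b * ‖c‖
  have Laux : ∀ c : EuclideanSpace ℂ (Fin n), ‖s (e (M⁻¹.mulVec c))‖ ≤ b * ‖c‖ := by
    intro c
    have hsq : ‖s (e (M⁻¹.mulVec c))‖ ^ 2 ≤ (b * ‖c‖) ^ 2 := by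
      rw [hnorm, mul_pow, hb, Real.sq_sqrt hMin]
      have h1' : M.mulVec (e (M⁻¹.mulVec c)) = c := hMMc c
      rw [h1']
      have : e ((c : EuclideanSpace ℂ (Fin n)) : Fin n → ℂ) = c := rfl
      calc RCLike.re (inner ℂ (e (M⁻¹.mulVec c)) (e (c : Fin n → ℂ)) : ℂ)
          ≤ ‖e (M⁻¹.mulVec c)‖ * ‖e (c : Fin n → ℂ)‖ := hreE _ _
        _ ≤ (matNorm M⁻¹ * ‖c‖) * ‖c‖ := by
            have := hMv M⁻¹ c
            have h0 : (0:ℝ) ≤ ‖e (c : Fin n → ℂ)‖ := norm_nonneg _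
            have heq : ‖e (c : Fin n → ℂ)‖ = ‖c‖ := rfl
            rw [heq]
            exact mul_le_mul_of_nonneg_right this (norm_nonneg _)
        _ = matNorm M⁻¹ * ‖c‖ ^ 2 := by ring
    have := Real.sqrt_le_sqrt hsq
    rwa [Real.sqrt_sq (norm_nonneg _), Real.sqrt_sq (by positivity)] at this
  -- L2 : ‖c‖ ≤ b * ‖s c‖
  have L2 : ∀ c : EuclideanSpace ℂ (Fin n), ‖c‖ ≤ b * ‖s c‖ := by
    intro c
    rcases eq_or_ne c 0 with hc | hc
    · rw [hc, norm_zero]; positivity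
    · have hc : (0:ℝ) < ‖c‖ := norm_pos_iff.mpr hc
      have key : ‖c‖ ^ 2 ≤ (b * ‖s c‖) * ‖c‖ := by
        have h2' : (inner ℂ (s c) (s (e (M⁻¹.mulVec c))) : ℂ) = inner ℂ c c := by
          rw [h2]
          congr 1
          exact congrArg e (hMMc c)
        have : ‖c‖ ^ 2 = RCLike.re (inner ℂ (s c) (s (e (M⁻¹.mulVec c))) : ℂ) := by
          rw [h2', inner_self_eq_norm_sq]
        rw [this]
        calc RCLike.re (inner ℂ (s c) (s (e (M⁻¹.mulVec c))) : ℂ)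
            ≤ ‖s c‖ * ‖s (e (M⁻¹.mulVec c))‖ := hre _ _
          _ ≤ ‖s c‖ * (b * ‖c‖) := mul_le_mul_of_nonneg_left (Laux c) (norm_nonneg _)
          _ = (b * ‖s c‖) * ‖c‖ := by ring
      have key2 : ‖c‖ * ‖c‖ ≤ (b * ‖s c‖) * ‖c‖ := by rw [← pow_two]; exact key
      exact le_of_mul_le_mul_right key2 hc
  -- the intertwining identity
  have hint : ∀ c : EuclideanSpace ℂ (Fin n),
      ((galerkinTrunc T φ ⟨s c, hmem c⟩ : V) : H) = s (e ((M⁻¹ * A).mulVec c)) := by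
    intro c
    have hg : ((galerkinTrunc T φ ⟨s c, hmem c⟩ : V) : H) =
        (Submodule.orthogonalProjection V (T (s c)) : H) := rfl
    rw [hg]
    set w : H := (Submodule.orthogonalProjection V (T (s c)) : H) - s (e ((M⁻¹ * A).mulVec c)) with hw
    have hwmem : w ∈ V := sub_mem (Submodule.coe_mem _) (hmem _)
    have hworth : ∀ i, (inner ℂ (φ i) w : ℂ) = 0 := by
      intro i
      rw [hw, inner_sub_right]
      have hp : (inner ℂ (φ i) ((Submodule.orthogonalProjection V (T (s c))) : H) : ℂ)
          = inner ℂ (φ i) (T (s c)) := by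
        have horth := Submodule.sub_starProjection_mem_orthogonal (K := V) (T (s c))
        have h0 : (inner ℂ (φ i) (T (s c) - (Submodule.orthogonalProjection V (T (s c)) : H)) : ℂ) = 0 :=
          Submodule.inner_right_of_mem_orthogonal (K := V) (Submodule.subset_span ⟨i, rfl⟩) horth
        rw [inner_sub_right, sub_eq_zero] at h0
        exact h0.symm
      have hTA : (inner ℂ (φ i) (T (s c)) : ℂ) = A.mulVec c i := by
        have : T (s c) = ∑ j, c j • T (φ j) := by
          rw [hs]; simp [map_sum, map_smul]
        rw [this, inner_sum]
        simp only [inner_smul_right, Matrix.mulVec, dotProduct]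
        exact Finset.sum_congr rfl fun j _ => by rw [hA]; ring
      have hMB : (inner ℂ (φ i) (s (e ((M⁻¹ * A).mulVec c))) : ℂ) = A.mulVec c i := by
        rw [h1]
        show M.mulVec ((M⁻¹ * A).mulVec c) i = A.mulVec c i
        rw [Matrix.mulVec_mulVec, hMMA]
      rw [hp, hTA, hMB, sub_self]
    have hww : (inner ℂ w w : ℂ) = 0 := by
      obtain ⟨d, hd⟩ := (Submodule.mem_span_range_iff_exists_fun (R := ℂ)).mp hwmem
      calc (inner ℂ w w : ℂ) = inner ℂ (∑ i, d i • φ i) w := by rw [hd]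
        _ = ∑ i, (starRingEnd ℂ) (d i) * (inner ℂ (φ i) w : ℂ) := by
            rw [sum_inner]; exact Finset.sum_congr rfl fun i _ => by rw [inner_smul_left]
        _ = 0 := by simp [hworth]
    have hw0 : w = 0 := inner_self_eq_zero.mp hww
    rw [hw] at hw0
    exact sub_eq_zero.mp hw0
  -- operator norm bounds
  have hCB : ∀ c : EuclideanSpace ℂ (Fin n),
      (Matrix.toEuclideanCLM (𝕜 := ℂ) (M⁻¹ * A) :
        EuclideanSpace ℂ (Fin n) →L[ℂ] EuclideanSpace ℂ (Fin n)) c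
        = e ((M⁻¹ * A).mulVec c) := fun c => rfl
  have hGnorm : ∀ c : EuclideanSpace ℂ (Fin n),
      ‖galerkinTrunc T φ ⟨s c, hmem c⟩‖ = ‖s (e ((M⁻¹ * A).mulVec c))‖ := by
    intro c
    rw [← hint c]
    rfl
  have upper : matNorm (M⁻¹ * A) ≤ (a * b) * ‖galerkinTrunc T φ‖ := by
    refine ContinuousLinearMap.opNorm_le_bound _ (by positivity) fun c => ?_
    have h3 : ‖e ((M⁻¹ * A).mulVec c)‖ ≤ b * ‖s (e ((M⁻¹ * A).mulVec c))‖ := L2 _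
    have h4 : ‖s (e ((M⁻¹ * A).mulVec c))‖ ≤ ‖galerkinTrunc T φ‖ * ‖s c‖ := by
      rw [← hGnorm c]
      calc ‖galerkinTrunc T φ ⟨s c, hmem c⟩‖
          ≤ ‖galerkinTrunc T φ‖ * ‖(⟨s c, hmem c⟩ : V)‖ :=
            (galerkinTrunc T φ).le_opNorm _
        _ = ‖galerkinTrunc T φ‖ * ‖s c‖ := rfl
    have h5 : ‖s c‖ ≤ a * ‖c‖ := L1 c
    have hGn : (0:ℝ) ≤ ‖galerkinTrunc T φ‖ := ContinuousLinearMap.opNorm_nonneg _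
    calc ‖(Matrix.toEuclideanCLM (𝕜 := ℂ) (M⁻¹ * A) :
        EuclideanSpace ℂ (Fin n) →L[ℂ] EuclideanSpace ℂ (Fin n)) c‖
        = ‖e ((M⁻¹ * A).mulVec c)‖ := by rw [hCB]
      _ ≤ b * ‖s (e ((M⁻¹ * A).mulVec c))‖ := h3
      _ ≤ b * (‖galerkinTrunc T φ‖ * ‖s c‖) := mul_le_mul_of_nonneg_left h4 hb0
      _ ≤ b * (‖galerkinTrunc T φ‖ * (a * ‖c‖)) := by
          refine mul_le_mul_of_nonneg_left (mul_le_mul_of_nonneg_left h5 hGn) hb0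
      _ = (a * b) * ‖galerkinTrunc T φ‖ * ‖c‖ := by ring
  have lower : ‖galerkinTrunc T φ‖ ≤ (a * b) * matNorm (M⁻¹ * A) := by
    have hBn : (0:ℝ) ≤ matNorm (M⁻¹ * A) := ContinuousLinearMap.opNorm_nonneg _
    refine ContinuousLinearMap.opNorm_le_bound _
      (mul_nonneg (mul_nonneg ha0 hb0) hBn) fun v => ?_
    obtain ⟨c0, hc0⟩ := (Submodule.mem_span_range_iff_exists_fun (R := ℂ)).mp v.2
    set c : EuclideanSpace ℂ (Fin n) := e c0 with hcdef
    have hc : s c = (v : H) := hc0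
    have hv : v = (⟨s c, hmem c⟩ : V) := Subtype.ext hc.symm
    have h6 : ‖e ((M⁻¹ * A).mulVec c)‖ ≤ matNorm (M⁻¹ * A) * ‖c‖ := hMv _ c
    calc ‖galerkinTrunc T φ v‖
        = ‖s (e ((M⁻¹ * A).mulVec c))‖ := by rw [hv, hGnorm c]
      _ ≤ a * ‖e ((M⁻¹ * A).mulVec c)‖ := L1 _
      _ ≤ a * (matNorm (M⁻¹ * A) * ‖c‖) := mul_le_mul_of_nonneg_left h6 ha0
      _ ≤ a * (matNorm (M⁻¹ * A) * (b * ‖s c‖)) := by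
          refine mul_le_mul_of_nonneg_left (mul_le_mul_of_nonneg_left (L2 c) hBn) ha0
      _ = (a * b) * matNorm (M⁻¹ * A) * ‖s c‖ := by ring
      _ = (a * b) * matNorm (M⁻¹ * A) * ‖v‖ := by rw [hv]; rfl
  have hr : Real.sqrt (matNorm M * matNorm M⁻¹) = a * b := Real.sqrt_mul hMn _
  constructor
  · rw [hr]
    rcases eq_or_lt_of_le (mul_nonneg ha0 hb0) with h0 | h0
    · rw [← h0] at lower ⊢
      have hG0 : ‖galerkinTrunc T φ‖ = 0 :=
        le_antisymm (by simpa using lower) (ContinuousLinearMap.opNorm_nonneg _)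
      rw [hG0, mul_zero]
      exact ContinuousLinearMap.opNorm_nonneg _
    · exact (inv_mul_le_iff₀ h0).mpr lower
  · rw [hr]; exact upper
end

section
/- In the Galerkin setting below, ‖A‖₂ ≤ ‖M‖₂ · ‖T̃‖; if in addition T̃ : V → V is invertible (equivalently, A is invertible), then ‖A⁻¹‖₂ ≤ ‖M⁻¹‖₂ · ‖T̃⁻¹‖, and consequently cond(A) := ‖A‖₂‖A⁻¹‖₂ satisfies cond(A) ≤ cond(M) · ‖T̃‖ · ‖T̃⁻¹‖. -/
set_option maxHeartbeats 1000000 in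
open ContinuousLinearMap in
theorem galerkin_matrix_condition_number_bound
    {H : Type*} [NormedAddCommGroup H] [InnerProductSpace ℂ H] [CompleteSpace H]
    {n : ℕ} (T : H →L[ℂ] H) (φ : Fin n → H) (hφ : LinearIndependent ℂ φ)
    -- the mass (Gram) matrix `M` and the Galerkin matrix `A`
    (M A : Matrix (Fin n) (Fin n) ℂ)
    (hM : ∀ i j, M i j = (inner ℂ (φ i) (φ j) : ℂ))
    (hA : ∀ i j, A i j = (inner ℂ (φ i) (T (φ j)) : ℂ)) :
    matNorm A ≤ matNorm M * ‖galerkinTrunc T φ‖ ∧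
    -- if in addition `T̃` is invertible (with continuous inverse `Tinv`):
    ∀ Tinv : Submodule.span ℂ (Set.range φ) →L[ℂ] Submodule.span ℂ (Set.range φ),
      galerkinTrunc T φ * Tinv = 1 → Tinv * galerkinTrunc T φ = 1 →
      matNorm A⁻¹ ≤ matNorm M⁻¹ * ‖Tinv‖ ∧
      matNorm A * matNorm A⁻¹ ≤
        (matNorm M * matNorm M⁻¹) * ‖galerkinTrunc T φ‖ * ‖Tinv‖ := by
  classical
  haveI : FiniteDimensional ℂ (Submodule.span ℂ (Set.range φ)) :=
    FiniteDimensional.span_of_finite ℂ (Set.finite_range φ)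
  set e := Matrix.toEuclideanCLM (𝕜 := ℂ) (n := Fin n) with he
  let b : Module.Basis (Fin n) ℂ (Submodule.span ℂ (Set.range φ)) := Module.Basis.span hφ
  let Jlin : EuclideanSpace ℂ (Fin n) ≃ₗ[ℂ] (Submodule.span ℂ (Set.range φ)) :=
    (WithLp.linearEquiv 2 ℂ (Fin n → ℂ)).trans b.equivFun.symm
  let J : EuclideanSpace ℂ (Fin n) ≃L[ℂ] (Submodule.span ℂ (Set.range φ)) :=
    Jlin.toContinuousLinearEquiv
  let K : EuclideanSpace ℂ (Fin n) →L[ℂ] (Submodule.span ℂ (Set.range φ)) :=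
    J.toContinuousLinearMap
  let L : (Submodule.span ℂ (Set.range φ)) →L[ℂ] EuclideanSpace ℂ (Fin n) :=
    J.symm.toContinuousLinearMap
  have hKapp : ∀ x : EuclideanSpace ℂ (Fin n),
      ((K x : Submodule.span ℂ (Set.range φ)) : H) = ∑ j, x j • φ j := by
    intro x
    show ((b.equivFun.symm (WithLp.equiv 2 _ x) : Submodule.span ℂ (Set.range φ)) : H) = _
    rw [Module.Basis.equivFun_symm_apply]
    push_cast
    simp [b, Module.Basis.span_apply]
  have hKL : ∀ v, K (L v) = v := fun v => J.apply_symm_apply v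
  have hLK : ∀ x, L (K x) = x := fun x => J.symm_apply_apply x
  have hKsingle : ∀ i, K (EuclideanSpace.single i (1 : ℂ)) = b i := by
    intro i
    show b.equivFun.symm (WithLp.equiv 2 _ (EuclideanSpace.single i 1)) = b i
    rw [Module.Basis.equivFun_symm_apply]
    have : ∀ j, (WithLp.equiv 2 (Fin n → ℂ) (EuclideanSpace.single i 1)) j
        = if j = i then 1 else 0 := by
      intro j; simp [EuclideanSpace.single_apply]
    simp only [this]
    simp [Finset.sum_ite_eq']
  -- the key identity
  have haux : ∀ (S : H →L[ℂ] H) (B : Matrix (Fin n) (Fin n) ℂ),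
      (∀ i j, B i j = (inner ℂ (φ i) (S (φ j)) : ℂ)) →
      e B = (adjoint K) ∘L ((galerkinTrunc S φ) ∘L K) := by
    intro S B hB
    apply ContinuousLinearMap.ext; intro x
    apply PiLp.ext; intro i
    have hlhs : (e B x) i = ∑ j, B i j * x j := by
      rw [he]
      show (Matrix.toLin' B (WithLp.equiv 2 _ x)) i = _
      simp [Matrix.toLin'_apply, Matrix.mulVec, dotProduct]
    have hrhs : ((adjoint K ∘L (galerkinTrunc S φ ∘L K)) x) i = ∑ j, B i j * x j := by
      have h1 : ((adjoint K ∘L (galerkinTrunc S φ ∘L K)) x) i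
          = (inner ℂ (EuclideanSpace.single i (1 : ℂ))
              ((adjoint K) (galerkinTrunc S φ (K x))) : ℂ) := by
        simp [EuclideanSpace.inner_single_left]
      rw [h1, ContinuousLinearMap.adjoint_inner_right, hKsingle]
      have h2 : galerkinTrunc S φ (K x)
          = Submodule.orthogonalProjection (Submodule.span ℂ (Set.range φ)) (S ((K x : _) : H)) := rfl
      rw [h2, Submodule.inner_orthogonalProjection_eq_of_mem_left]
      rw [show ((b i : Submodule.span ℂ (Set.range φ)) : H) = φ i from congrArg Subtype.val (Module.Basis.span_apply hφ i)]
      rw [hKapp, map_sum]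
      simp only [map_smul, inner_sum, inner_smul_right]
      exact Finset.sum_congr rfl fun j _ => by rw [hB i j]; ring
    rw [hlhs, hrhs]
  have hAeq : e A = (adjoint K) ∘L ((galerkinTrunc T φ) ∘L K) := haux T A hA
  have hG1 : (galerkinTrunc (1 : H →L[ℂ] H) φ) ∘L K = K := by
    apply ContinuousLinearMap.ext; intro x
    show Submodule.orthogonalProjection (Submodule.span ℂ (Set.range φ))
        ((1 : H →L[ℂ] H) ((K x : _) : H)) = K x
    rw [ContinuousLinearMap.one_apply]
    exact Submodule.orthogonalProjection_mem_subspace_eq_self (K x)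
  have hMeq : e M = (adjoint K) ∘L K := by
    rw [haux 1 M (by simpa using hM), hG1]
  have hnK : ‖adjoint K‖ = ‖K‖ := by
    exact (ContinuousLinearMap.adjoint (𝕜 := ℂ)).norm_map K
  have hnL : ‖adjoint L‖ = ‖L‖ := by
    exact (ContinuousLinearMap.adjoint (𝕜 := ℂ)).norm_map L
  have hnormM : matNorm M = ‖K‖ * ‖K‖ := by
    show ‖e M‖ = _
    rw [hMeq]
    exact ContinuousLinearMap.norm_adjoint_comp_self K
  have h1 : matNorm A ≤ matNorm M * ‖galerkinTrunc T φ‖ := by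
    show ‖e A‖ ≤ _
    rw [hAeq, hnormM]
    calc ‖adjoint K ∘L (galerkinTrunc T φ ∘L K)‖
        ≤ ‖adjoint K‖ * ‖galerkinTrunc T φ ∘L K‖ := ContinuousLinearMap.opNorm_comp_le _ _
      _ ≤ ‖adjoint K‖ * (‖galerkinTrunc T φ‖ * ‖K‖) :=
          mul_le_mul_of_nonneg_left (ContinuousLinearMap.opNorm_comp_le (galerkinTrunc T φ) K)
            (ContinuousLinearMap.opNorm_nonneg (adjoint K))
      _ = ‖K‖ * ‖K‖ * ‖galerkinTrunc T φ‖ := by rw [hnK]; ring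
  refine ⟨h1, ?_⟩
  intro Tinv hT1 hT2
  have hT1' : ∀ y, galerkinTrunc T φ (Tinv y) = y := fun y =>
    congrFun (congrArg DFunLike.coe hT1) y
  have hT2' : ∀ y, Tinv (galerkinTrunc T φ y) = y := fun y =>
    congrFun (congrArg DFunLike.coe hT2) y
  have hadj1 : ∀ x, adjoint K (adjoint L x) = x := by
    intro x
    have : adjoint K ∘L adjoint L = 1 := by
      rw [← ContinuousLinearMap.adjoint_comp]
      have : L ∘L K = ContinuousLinearMap.id ℂ _ := by
        apply ContinuousLinearMap.ext; intro x; exact hLK x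
      rw [this, ContinuousLinearMap.adjoint_id]
      rfl
    exact congrFun (congrArg DFunLike.coe this) x
  have hadj2 : ∀ x, adjoint L (adjoint K x) = x := by
    intro x
    have : adjoint L ∘L adjoint K = 1 := by
      rw [← ContinuousLinearMap.adjoint_comp]
      have : K ∘L L = ContinuousLinearMap.id ℂ _ := by
        apply ContinuousLinearMap.ext; intro x; exact hKL x
      rw [this, ContinuousLinearMap.adjoint_id]
      rfl
    exact congrFun (congrArg DFunLike.coe this) x
  -- inverse of A
  let eB := L ∘L (Tinv ∘L adjoint L)
  let B := e.symm eB
  have hmul : ∀ X Y : Matrix (Fin n) (Fin n) ℂ, e (X * Y) = e X * e Y := fun X Y => map_mul e X Y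
  have hone : e (1 : Matrix (Fin n) (Fin n) ℂ) = 1 := map_one e
  have hAB : A * B = 1 := by
    apply EquivLike.injective e
    rw [hmul, hone, hAeq]
    show _ = (1 : EuclideanSpace ℂ (Fin n) →L[ℂ] EuclideanSpace ℂ (Fin n))
    have heB : e B = eB := e.apply_symm_apply eB
    rw [heB]
    apply ContinuousLinearMap.ext; intro x
    show adjoint K (galerkinTrunc T φ (K (L (Tinv (adjoint L x))))) = x
    rw [hKL, hT1', hadj1]
  have hBA : B * A = 1 := by
    apply EquivLike.injective e
    rw [hmul, hone, hAeq]
    have heB : e B = eB := e.apply_symm_apply eB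
    rw [heB]
    apply ContinuousLinearMap.ext; intro x
    show L (Tinv (adjoint L (adjoint K (galerkinTrunc T φ (K x))))) = x
    rw [hadj2, hT2', hLK]
  have hAinv : A⁻¹ = B := Matrix.inv_eq_right_inv hAB
  -- inverse of M
  let eC := L ∘L adjoint L
  let C := e.symm eC
  have hMC : M * C = 1 := by
    apply EquivLike.injective e
    rw [hmul, hone, hMeq]
    have heC : e C = eC := e.apply_symm_apply eC
    rw [heC]
    apply ContinuousLinearMap.ext; intro x
    show adjoint K (K (L (adjoint L x))) = x
    rw [hKL, hadj1]
  have hMinv : M⁻¹ = C := Matrix.inv_eq_right_inv hMC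
  have hnormMinv : matNorm M⁻¹ = ‖L‖ * ‖L‖ := by
    show ‖e M⁻¹‖ = _
    rw [hMinv]
    have heC : e C = eC := e.apply_symm_apply eC
    rw [heC]
    have : eC = adjoint (adjoint L) ∘L adjoint L := by
      rw [ContinuousLinearMap.adjoint_adjoint]
    rw [this, ContinuousLinearMap.norm_adjoint_comp_self, hnL]
  have h2 : matNorm A⁻¹ ≤ matNorm M⁻¹ * ‖Tinv‖ := by
    show ‖e A⁻¹‖ ≤ _
    rw [hAinv, hnormMinv]
    have heB : e B = eB := e.apply_symm_apply eB
    rw [heB]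
    calc ‖L ∘L (Tinv ∘L adjoint L)‖
        ≤ ‖L‖ * ‖Tinv ∘L adjoint L‖ := ContinuousLinearMap.opNorm_comp_le _ _
      _ ≤ ‖L‖ * (‖Tinv‖ * ‖adjoint L‖) :=
          mul_le_mul_of_nonneg_left (ContinuousLinearMap.opNorm_comp_le Tinv (adjoint L))
            (ContinuousLinearMap.opNorm_nonneg L)
      _ = ‖L‖ * ‖L‖ * ‖Tinv‖ := by rw [hnL]; ring
  refine ⟨h2, ?_⟩
  have hnn : (0:ℝ) ≤ matNorm A := norm_nonneg _
  have hnn2 : (0:ℝ) ≤ matNorm M⁻¹ * ‖Tinv‖ :=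
    mul_nonneg (norm_nonneg _) (ContinuousLinearMap.opNorm_nonneg Tinv)
  calc matNorm A * matNorm A⁻¹
      ≤ (matNorm M * ‖galerkinTrunc T φ‖) * (matNorm M⁻¹ * ‖Tinv‖) :=
        mul_le_mul h1 h2 (norm_nonneg _) (mul_nonneg (norm_nonneg _) (ContinuousLinearMap.opNorm_nonneg _))
    _ = (matNorm M * matNorm M⁻¹) * ‖galerkinTrunc T φ‖ * ‖Tinv‖ := by ring
end

section
/- Let a > 0 and let U := { (ω, θ, ω*, θ*) ∈ ℝ⁴ : sinh²(ω) + sin²(θ) ≠ 0 and (ω*, θ*) ≠ (0,0) }. Define on U the functions H(ω, θ, ω*, θ*) := √((ω*)² + (θ*)²) / ( a √(sinh²(ω) + sin²(θ)) ) and L(ω, θ, ω*, θ*) := ( −sin²(θ)(ω*)² + sinh²(ω)(θ*)² ) / ( (ω*)² + (θ*)² ). Then H and L are differentiable on U and their Poisson bracket vanishes identically on U: (∂H/∂ω*)(∂L/∂ω) + (∂H/∂θ*)(∂L/∂θ) − (∂H/∂ω)(∂L/∂ω*) − (∂H/∂θ)(∂L/∂θ*) = 0 at every point of U. In particular, L is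 conserved along the Hamiltonian flow of H. -/
/-- Partial derivative of `F : ℝ⁴ → ℝ` in the first variable `ω`. -/
noncomputable def pdOmega (F : ℝ × ℝ × ℝ × ℝ → ℝ) (p : ℝ × ℝ × ℝ × ℝ) : ℝ :=
  deriv (fun w => F (w, p.2.1, p.2.2.1, p.2.2.2)) p.1

/-- Partial derivative of `F : ℝ⁴ → ℝ` in the second variable `θ`. -/
noncomputable def pdTheta (F : ℝ × ℝ × ℝ × ℝ → ℝ) (p : ℝ × ℝ × ℝ × ℝ) : ℝ :=
  deriv (fun w => F (p.1, w, p.2.2.1, p.2.2.2)) p.2.1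

/-- Partial derivative of `F : ℝ⁴ → ℝ` in the third variable `ω*`. -/
noncomputable def pdOmegaStar (F : ℝ × ℝ × ℝ × ℝ → ℝ) (p : ℝ × ℝ × ℝ × ℝ) : ℝ :=
  deriv (fun w => F (p.1, p.2.1, w, p.2.2.2)) p.2.2.1

/-- Partial derivative of `F : ℝ⁴ → ℝ` in the fourth variable `θ*`. -/
noncomputable def pdThetaStar (F : ℝ × ℝ × ℝ × ℝ → ℝ) (p : ℝ × ℝ × ℝ × ℝ) : ℝ :=
  deriv (fun w => F (p.1, p.2.1, p.2.2.1, w)) p.2.2.2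


section PBaux

open Real



lemma PB.hdS (o t : ℝ) : HasDerivAt (fun w => Real.sinh w ^ 2 + Real.sin t ^ 2)
    (2 * Real.sinh o * Real.cosh o) o := by
  have h := ((Real.hasDerivAt_sinh o).fun_pow 2).add_const (Real.sin t ^ 2)
  refine h.congr_deriv ?_
  ring

lemma PB.hdT (o t : ℝ) : HasDerivAt (fun w => Real.sinh o ^ 2 + Real.sin w ^ 2)
    (2 * Real.sin t * Real.cos t) t := by
  have h := (((Real.hasDerivAt_sin t).fun_pow 2).const_add (Real.sinh o ^ 2))
  refine h.congr_deriv ?_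
  ring

lemma PB.hdsqrtS (o t : ℝ) (hS : Real.sinh o ^ 2 + Real.sin t ^ 2 ≠ 0) :
    HasDerivAt (fun w => Real.sqrt (Real.sinh w ^ 2 + Real.sin t ^ 2))
      (Real.sinh o * Real.cosh o / Real.sqrt (Real.sinh o ^ 2 + Real.sin t ^ 2)) o := by
  have h := (Real.hasDerivAt_sqrt hS).comp o (PB.hdS o t)
  refine h.congr_deriv ?_
  field_simp

lemma PB.hdsqrtT (o t : ℝ) (hS : Real.sinh o ^ 2 + Real.sin t ^ 2 ≠ 0) :
    HasDerivAt (fun w => Real.sqrt (Real.sinh o ^ 2 + Real.sin w ^ 2))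
      (Real.sin t * Real.cos t / Real.sqrt (Real.sinh o ^ 2 + Real.sin t ^ 2)) t := by
  have h := (Real.hasDerivAt_sqrt hS).comp t (PB.hdT o t)
  refine h.congr_deriv ?_
  field_simp

lemma PB.pdH_omega (a o t x y : ℝ) (ha : a ≠ 0) (hS : 0 < Real.sinh o ^ 2 + Real.sin t ^ 2) :
    deriv (fun w => Real.sqrt (x ^ 2 + y ^ 2) / (a * Real.sqrt (Real.sinh w ^ 2 + Real.sin t ^ 2))) o
      = -(Real.sqrt (x ^ 2 + y ^ 2) * Real.sinh o * Real.cosh o) /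
        (a * ((Real.sinh o ^ 2 + Real.sin t ^ 2) * Real.sqrt (Real.sinh o ^ 2 + Real.sin t ^ 2))) := by
  have h := (hasDerivAt_const o (Real.sqrt (x ^ 2 + y ^ 2))).fun_div
    ((PB.hdsqrtS o t hS.ne').const_mul a) (by positivity)
  rw [h.deriv]
  set u := Real.sqrt (Real.sinh o ^ 2 + Real.sin t ^ 2) with hu
  have hu0 : u ≠ 0 := by rw [hu]; positivity
  have hu2 : Real.sinh o ^ 2 + Real.sin t ^ 2 = u ^ 2 := (Real.sq_sqrt hS.le).symm
  rw [hu2]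
  field_simp
  ring

lemma PB.pdH_theta (a o t x y : ℝ) (ha : a ≠ 0) (hS : 0 < Real.sinh o ^ 2 + Real.sin t ^ 2) :
    deriv (fun w => Real.sqrt (x ^ 2 + y ^ 2) / (a * Real.sqrt (Real.sinh o ^ 2 + Real.sin w ^ 2))) t
      = -(Real.sqrt (x ^ 2 + y ^ 2) * Real.sin t * Real.cos t) /
        (a * ((Real.sinh o ^ 2 + Real.sin t ^ 2) * Real.sqrt (Real.sinh o ^ 2 + Real.sin t ^ 2))) := by
  have h := (hasDerivAt_const t (Real.sqrt (x ^ 2 + y ^ 2))).fun_div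
    ((PB.hdsqrtT o t hS.ne').const_mul a) (by positivity)
  rw [h.deriv]
  set u := Real.sqrt (Real.sinh o ^ 2 + Real.sin t ^ 2) with hu
  have hu0 : u ≠ 0 := by rw [hu]; positivity
  have hu2 : Real.sinh o ^ 2 + Real.sin t ^ 2 = u ^ 2 := (Real.sq_sqrt hS.le).symm
  rw [hu2]
  field_simp
  ring

lemma PB.hdR1 (x y : ℝ) : HasDerivAt (fun w => w ^ 2 + y ^ 2) (2 * x) x := by
  have h := ((hasDerivAt_id x).fun_pow 2).add_const (y ^ 2)
  refine h.congr_deriv ?_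
  simp

lemma PB.hdR2 (x y : ℝ) : HasDerivAt (fun w => x ^ 2 + w ^ 2) (2 * y) y := by
  have h := (((hasDerivAt_id y).fun_pow 2).const_add (x ^ 2))
  refine h.congr_deriv ?_
  simp

lemma PB.pdH_x (c a o t x y : ℝ) (hc : c ≠ 0) (hR : 0 < x ^ 2 + y ^ 2) :
    deriv (fun w => Real.sqrt (w ^ 2 + y ^ 2) / c) x
      = x / (Real.sqrt (x ^ 2 + y ^ 2) * c) := by
  have h' : HasDerivAt (fun w => Real.sqrt (w ^ 2 + y ^ 2) / c)
      (1 / (2 * Real.sqrt (x ^ 2 + y ^ 2)) * (2 * x) / c) x :=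
    ((Real.hasDerivAt_sqrt hR.ne').comp x (PB.hdR1 x y)).div_const c
  rw [h'.deriv]
  have hv0 : Real.sqrt (x ^ 2 + y ^ 2) ≠ 0 := by positivity
  field_simp

lemma PB.pdH_y (c a o t x y : ℝ) (hc : c ≠ 0) (hR : 0 < x ^ 2 + y ^ 2) :
    deriv (fun w => Real.sqrt (x ^ 2 + w ^ 2) / c) y
      = y / (Real.sqrt (x ^ 2 + y ^ 2) * c) := by
  have h' : HasDerivAt (fun w => Real.sqrt (x ^ 2 + w ^ 2) / c)
      (1 / (2 * Real.sqrt (x ^ 2 + y ^ 2)) * (2 * y) / c) y :=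
    ((Real.hasDerivAt_sqrt hR.ne').comp y (PB.hdR2 x y)).div_const c
  rw [h'.deriv]
  have hv0 : Real.sqrt (x ^ 2 + y ^ 2) ≠ 0 := by positivity
  field_simp

lemma PB.pdL_omega (o t x y : ℝ) (hR : 0 < x ^ 2 + y ^ 2) :
    deriv (fun w => (-(Real.sin t ^ 2) * x ^ 2 + Real.sinh w ^ 2 * y ^ 2) / (x ^ 2 + y ^ 2)) o
      = 2 * Real.sinh o * Real.cosh o * y ^ 2 / (x ^ 2 + y ^ 2) := by
  have h := ((((Real.hasDerivAt_sinh o).fun_pow 2).mul_const (y ^ 2)).const_add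
    (-(Real.sin t ^ 2) * x ^ 2)).div_const (x ^ 2 + y ^ 2)
  rw [h.deriv]
  ring

lemma PB.pdL_theta (o t x y : ℝ) (hR : 0 < x ^ 2 + y ^ 2) :
    deriv (fun w => (-(Real.sin w ^ 2) * x ^ 2 + Real.sinh o ^ 2 * y ^ 2) / (x ^ 2 + y ^ 2)) t
      = -(2 * Real.sin t * Real.cos t * x ^ 2) / (x ^ 2 + y ^ 2) := by
  have h1 : HasDerivAt (fun w => -(Real.sin w ^ 2) * x ^ 2 + Real.sinh o ^ 2 * y ^ 2)
      (-(2 * Real.sin t * Real.cos t * x ^ 2)) t := by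
    have h := ((((Real.hasDerivAt_sin t).fun_pow 2).neg).mul_const (x ^ 2)).add_const
      (Real.sinh o ^ 2 * y ^ 2)
    refine h.congr_deriv ?_
    simp
  rw [(h1.div_const (x ^ 2 + y ^ 2)).deriv]

lemma PB.pdL_x (o t x y : ℝ) (hR : 0 < x ^ 2 + y ^ 2) :
    deriv (fun w => (-(Real.sin t ^ 2) * w ^ 2 + Real.sinh o ^ 2 * y ^ 2) / (w ^ 2 + y ^ 2)) x
      = -(2 * x * y ^ 2 * (Real.sinh o ^ 2 + Real.sin t ^ 2)) / (x ^ 2 + y ^ 2) ^ 2 := by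
  have h1 : HasDerivAt (fun w => -(Real.sin t ^ 2) * w ^ 2 + Real.sinh o ^ 2 * y ^ 2)
      (-(Real.sin t ^ 2) * (2 * x)) x := by
    have h := (((hasDerivAt_id x).fun_pow 2).const_mul (-(Real.sin t ^ 2))).add_const
      (Real.sinh o ^ 2 * y ^ 2)
    refine h.congr_deriv ?_
    simp
  have h := h1.fun_div (PB.hdR1 x y) hR.ne'
  rw [h.deriv]
  field_simp
  ring

lemma PB.pdL_y (o t x y : ℝ) (hR : 0 < x ^ 2 + y ^ 2) :
    deriv (fun w => (-(Real.sin t ^ 2) * x ^ 2 + Real.sinh o ^ 2 * w ^ 2) / (x ^ 2 + w ^ 2)) y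
      = 2 * y * x ^ 2 * (Real.sinh o ^ 2 + Real.sin t ^ 2) / (x ^ 2 + y ^ 2) ^ 2 := by
  have h1 : HasDerivAt (fun w => -(Real.sin t ^ 2) * x ^ 2 + Real.sinh o ^ 2 * w ^ 2)
      (Real.sinh o ^ 2 * (2 * y)) y := by
    have h := (((hasDerivAt_id y).fun_pow 2).const_mul (Real.sinh o ^ 2)).const_add
      (-(Real.sin t ^ 2) * x ^ 2)
    refine h.congr_deriv ?_
    simp
  have h := h1.fun_div (PB.hdR2 x y) hR.ne'
  rw [h.deriv]
  field_simp
  ring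


lemma PB.diffH (a : ℝ) (ha : a ≠ 0) (p : ℝ × ℝ × ℝ × ℝ)
    (hS : 0 < Real.sinh p.1 ^ 2 + Real.sin p.2.1 ^ 2)
    (hR : 0 < p.2.2.1 ^ 2 + p.2.2.2 ^ 2) :
    DifferentiableAt ℝ (fun p : ℝ × ℝ × ℝ × ℝ => Real.sqrt (p.2.2.1 ^ 2 + p.2.2.2 ^ 2) /
      (a * Real.sqrt (Real.sinh p.1 ^ 2 + Real.sin p.2.1 ^ 2))) p := by
  have h1 : DifferentiableAt ℝ (fun p : ℝ × ℝ × ℝ × ℝ => p.2.2.1 ^ 2 + p.2.2.2 ^ 2) p := by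
    fun_prop
  have h2 : DifferentiableAt ℝ (fun p : ℝ × ℝ × ℝ × ℝ =>
      Real.sinh p.1 ^ 2 + Real.sin p.2.1 ^ 2) p := by fun_prop
  have hden : a * Real.sqrt (Real.sinh p.1 ^ 2 + Real.sin p.2.1 ^ 2) ≠ 0 :=
    mul_ne_zero ha (Real.sqrt_ne_zero'.mpr hS)
  simp only [div_eq_mul_inv]
  exact (h1.sqrt hR.ne').mul (((h2.sqrt hS.ne').const_mul a).inv hden)

lemma PB.diffL (p : ℝ × ℝ × ℝ × ℝ) (hR : 0 < p.2.2.1 ^ 2 + p.2.2.2 ^ 2) :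
    DifferentiableAt ℝ (fun p : ℝ × ℝ × ℝ × ℝ =>
      (-(Real.sin p.2.1 ^ 2) * p.2.2.1 ^ 2 + Real.sinh p.1 ^ 2 * p.2.2.2 ^ 2) /
        (p.2.2.1 ^ 2 + p.2.2.2 ^ 2)) p := by
  have h1 : DifferentiableAt ℝ (fun p : ℝ × ℝ × ℝ × ℝ =>
      -(Real.sin p.2.1 ^ 2) * p.2.2.1 ^ 2 + Real.sinh p.1 ^ 2 * p.2.2.2 ^ 2) p := by fun_prop
  have h2 : DifferentiableAt ℝ (fun p : ℝ × ℝ × ℝ × ℝ => p.2.2.1 ^ 2 + p.2.2.2 ^ 2) p := by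
    fun_prop
  simp only [div_eq_mul_inv]
  exact h1.mul (h2.inv hR.ne')
lemma PB.pdOmega_fderiv (F : ℝ × ℝ × ℝ × ℝ → ℝ) (p : ℝ × ℝ × ℝ × ℝ)
    (hF : DifferentiableAt ℝ F p) :
    pdOmega F p = fderiv ℝ F p (1, 0, 0, 0) := by
  have hι : HasDerivAt (fun w : ℝ => ((w, p.2.1, p.2.2.1, p.2.2.2) : ℝ × ℝ × ℝ × ℝ))
      ((1, 0, 0, 0) : ℝ × ℝ × ℝ × ℝ) p.1 :=
    (hasDerivAt_id p.1).prodMk ((hasDerivAt_const p.1 (p.2.1, p.2.2.1, p.2.2.2)))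
  have h := hF.hasFDerivAt.comp_hasDerivAt p.1 hι
  exact h.deriv

lemma PB.pdTheta_fderiv (F : ℝ × ℝ × ℝ × ℝ → ℝ) (p : ℝ × ℝ × ℝ × ℝ)
    (hF : DifferentiableAt ℝ F p) :
    pdTheta F p = fderiv ℝ F p (0, 1, 0, 0) := by
  have hι : HasDerivAt (fun w : ℝ => ((p.1, w, p.2.2.1, p.2.2.2) : ℝ × ℝ × ℝ × ℝ))
      ((0, 1, 0, 0) : ℝ × ℝ × ℝ × ℝ) p.2.1 :=
    (hasDerivAt_const p.2.1 p.1).prodMk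
      ((hasDerivAt_id p.2.1).prodMk (hasDerivAt_const p.2.1 (p.2.2.1, p.2.2.2)))
  exact (hF.hasFDerivAt.comp_hasDerivAt p.2.1 hι).deriv

lemma PB.pdOmegaStar_fderiv (F : ℝ × ℝ × ℝ × ℝ → ℝ) (p : ℝ × ℝ × ℝ × ℝ)
    (hF : DifferentiableAt ℝ F p) :
    pdOmegaStar F p = fderiv ℝ F p (0, 0, 1, 0) := by
  have hι : HasDerivAt (fun w : ℝ => ((p.1, p.2.1, w, p.2.2.2) : ℝ × ℝ × ℝ × ℝ))
      ((0, 0, 1, 0) : ℝ × ℝ × ℝ × ℝ) p.2.2.1 :=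
    (hasDerivAt_const p.2.2.1 p.1).prodMk ((hasDerivAt_const p.2.2.1 p.2.1).prodMk
      ((hasDerivAt_id p.2.2.1).prodMk (hasDerivAt_const p.2.2.1 p.2.2.2)))
  exact (hF.hasFDerivAt.comp_hasDerivAt p.2.2.1 hι).deriv

lemma PB.pdThetaStar_fderiv (F : ℝ × ℝ × ℝ × ℝ → ℝ) (p : ℝ × ℝ × ℝ × ℝ)
    (hF : DifferentiableAt ℝ F p) :
    pdThetaStar F p = fderiv ℝ F p (0, 0, 0, 1) := by
  have hι : HasDerivAt (fun w : ℝ => ((p.1, p.2.1, p.2.2.1, w) : ℝ × ℝ × ℝ × ℝ))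
      ((0, 0, 0, 1) : ℝ × ℝ × ℝ × ℝ) p.2.2.2 :=
    (hasDerivAt_const p.2.2.2 p.1).prodMk ((hasDerivAt_const p.2.2.2 p.2.1).prodMk
      ((hasDerivAt_const p.2.2.2 p.2.2.1).prodMk (hasDerivAt_id p.2.2.2)))
  exact (hF.hasFDerivAt.comp_hasDerivAt p.2.2.2 hι).deriv

lemma PB.fderiv_apply_vec (F : ℝ × ℝ × ℝ × ℝ → ℝ) (p : ℝ × ℝ × ℝ × ℝ)
    (hF : DifferentiableAt ℝ F p) (v1 v2 v3 v4 : ℝ) :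
    fderiv ℝ F p (v1, v2, v3, v4) =
      v1 * pdOmega F p + v2 * pdTheta F p + v3 * pdOmegaStar F p + v4 * pdThetaStar F p := by
  have hv : ((v1, v2, v3, v4) : ℝ × ℝ × ℝ × ℝ) =
      v1 • ((1, 0, 0, 0) : ℝ × ℝ × ℝ × ℝ) + v2 • (0, 1, 0, 0) + v3 • (0, 0, 1, 0)
        + v4 • (0, 0, 0, 1) := by
    simp [Prod.ext_iff]
  rw [hv, map_add, map_add, map_add, map_smul, map_smul, map_smul, map_smul,
    PB.pdOmega_fderiv F p hF, PB.pdTheta_fderiv F p hF, PB.pdOmegaStar_fderiv F p hF,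
    PB.pdThetaStar_fderiv F p hF]
  simp [smul_eq_mul]


end PBaux



theorem poisson_bracket_vanishes (a : ℝ) (ha : 0 < a)
    (U : Set (ℝ × ℝ × ℝ × ℝ))
    (hU : U = {p : ℝ × ℝ × ℝ × ℝ |
      Real.sinh p.1 ^ 2 + Real.sin p.2.1 ^ 2 ≠ 0 ∧ (p.2.2.1, p.2.2.2) ≠ (0, 0)})
    (Hf Lf : ℝ × ℝ × ℝ × ℝ → ℝ)
    (hHf : ∀ p : ℝ × ℝ × ℝ × ℝ, Hf p =
      Real.sqrt (p.2.2.1 ^ 2 + p.2.2.2 ^ 2) /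
        (a * Real.sqrt (Real.sinh p.1 ^ 2 + Real.sin p.2.1 ^ 2)))
    (hLf : ∀ p : ℝ × ℝ × ℝ × ℝ, Lf p =
      (-(Real.sin p.2.1 ^ 2) * p.2.2.1 ^ 2 + Real.sinh p.1 ^ 2 * p.2.2.2 ^ 2) /
        (p.2.2.1 ^ 2 + p.2.2.2 ^ 2)) :
    DifferentiableOn ℝ Hf U ∧ DifferentiableOn ℝ Lf U ∧
    (∀ p ∈ U,
      pdOmegaStar Hf p * pdOmega Lf p + pdThetaStar Hf p * pdTheta Lf p
        - pdOmega Hf p * pdOmegaStar Lf p - pdTheta Hf p * pdThetaStar Lf p = 0) ∧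
    -- in particular, `L` is conserved along the Hamiltonian flow of `H`
    (∀ c : ℝ → ℝ × ℝ × ℝ × ℝ, (∀ t : ℝ, c t ∈ U) →
      (∀ t : ℝ, HasDerivAt (fun s => (c s).1) (pdOmegaStar Hf (c t)) t) →
      (∀ t : ℝ, HasDerivAt (fun s => (c s).2.1) (pdThetaStar Hf (c t)) t) →
      (∀ t : ℝ, HasDerivAt (fun s => (c s).2.2.1) (-pdOmega Hf (c t)) t) →
      (∀ t : ℝ, HasDerivAt (fun s => (c s).2.2.2) (-pdTheta Hf (c t)) t) →
      ∀ t : ℝ, HasDerivAt (fun s => Lf (c s)) 0 t) := by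
  subst hU
  have hHe : Hf = fun p : ℝ × ℝ × ℝ × ℝ =>
      Real.sqrt (p.2.2.1 ^ 2 + p.2.2.2 ^ 2) /
        (a * Real.sqrt (Real.sinh p.1 ^ 2 + Real.sin p.2.1 ^ 2)) := funext hHf
  have hLe : Lf = fun p : ℝ × ℝ × ℝ × ℝ =>
      (-(Real.sin p.2.1 ^ 2) * p.2.2.1 ^ 2 + Real.sinh p.1 ^ 2 * p.2.2.2 ^ 2) /
        (p.2.2.1 ^ 2 + p.2.2.2 ^ 2) := funext hLf
  subst hHe; subst hLe
  have pos : ∀ p : ℝ × ℝ × ℝ × ℝ, p ∈ {p : ℝ × ℝ × ℝ × ℝ |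
      Real.sinh p.1 ^ 2 + Real.sin p.2.1 ^ 2 ≠ 0 ∧ (p.2.2.1, p.2.2.2) ≠ (0, 0)} →
      0 < Real.sinh p.1 ^ 2 + Real.sin p.2.1 ^ 2 ∧ 0 < p.2.2.1 ^ 2 + p.2.2.2 ^ 2 := by
    rintro ⟨o, t, x, y⟩ ⟨h1, h2⟩
    refine ⟨lt_of_le_of_ne (by positivity) (Ne.symm h1), ?_⟩
    rcases lt_or_eq_of_le (by positivity : (0:ℝ) ≤ x ^ 2 + y ^ 2) with h | h
    · exact h
    · exfalso
      apply h2
      have hx : x = 0 := by nlinarith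
      have hy : y = 0 := by nlinarith
      simp [hx, hy]
  have key : ∀ p ∈ {p : ℝ × ℝ × ℝ × ℝ |
      Real.sinh p.1 ^ 2 + Real.sin p.2.1 ^ 2 ≠ 0 ∧ (p.2.2.1, p.2.2.2) ≠ (0, 0)},
      pdOmegaStar (fun p : ℝ × ℝ × ℝ × ℝ =>
        Real.sqrt (p.2.2.1 ^ 2 + p.2.2.2 ^ 2) /
          (a * Real.sqrt (Real.sinh p.1 ^ 2 + Real.sin p.2.1 ^ 2))) p *
        pdOmega (fun p : ℝ × ℝ × ℝ × ℝ =>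
          (-(Real.sin p.2.1 ^ 2) * p.2.2.1 ^ 2 + Real.sinh p.1 ^ 2 * p.2.2.2 ^ 2) /
            (p.2.2.1 ^ 2 + p.2.2.2 ^ 2)) p +
      pdThetaStar (fun p : ℝ × ℝ × ℝ × ℝ =>
        Real.sqrt (p.2.2.1 ^ 2 + p.2.2.2 ^ 2) /
          (a * Real.sqrt (Real.sinh p.1 ^ 2 + Real.sin p.2.1 ^ 2))) p *
        pdTheta (fun p : ℝ × ℝ × ℝ × ℝ =>
          (-(Real.sin p.2.1 ^ 2) * p.2.2.1 ^ 2 + Real.sinh p.1 ^ 2 * p.2.2.2 ^ 2) /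
            (p.2.2.1 ^ 2 + p.2.2.2 ^ 2)) p -
      pdOmega (fun p : ℝ × ℝ × ℝ × ℝ =>
        Real.sqrt (p.2.2.1 ^ 2 + p.2.2.2 ^ 2) /
          (a * Real.sqrt (Real.sinh p.1 ^ 2 + Real.sin p.2.1 ^ 2))) p *
        pdOmegaStar (fun p : ℝ × ℝ × ℝ × ℝ =>
          (-(Real.sin p.2.1 ^ 2) * p.2.2.1 ^ 2 + Real.sinh p.1 ^ 2 * p.2.2.2 ^ 2) /
            (p.2.2.1 ^ 2 + p.2.2.2 ^ 2)) p -
      pdTheta (fun p : ℝ × ℝ × ℝ × ℝ =>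
        Real.sqrt (p.2.2.1 ^ 2 + p.2.2.2 ^ 2) /
          (a * Real.sqrt (Real.sinh p.1 ^ 2 + Real.sin p.2.1 ^ 2))) p *
        pdThetaStar (fun p : ℝ × ℝ × ℝ × ℝ =>
          (-(Real.sin p.2.1 ^ 2) * p.2.2.1 ^ 2 + Real.sinh p.1 ^ 2 * p.2.2.2 ^ 2) /
            (p.2.2.1 ^ 2 + p.2.2.2 ^ 2)) p = 0 := by
    intro p hp
    obtain ⟨hS, hR⟩ := pos p hp
    obtain ⟨o, t, x, y⟩ := p
    simp only [pdOmega, pdTheta, pdOmegaStar, pdThetaStar]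
    have hS' : 0 < Real.sinh o ^ 2 + Real.sin t ^ 2 := hS
    have hR' : 0 < x ^ 2 + y ^ 2 := hR
    have hc : a * Real.sqrt (Real.sinh o ^ 2 + Real.sin t ^ 2) ≠ 0 :=
      mul_ne_zero ha.ne' (Real.sqrt_ne_zero'.mpr hS')
    rw [PB.pdH_omega a o t x y ha.ne' hS', PB.pdH_theta a o t x y ha.ne' hS',
      PB.pdH_x _ a o t x y hc hR', PB.pdH_y _ a o t x y hc hR',
      PB.pdL_omega o t x y hR', PB.pdL_theta o t x y hR',
      PB.pdL_x o t x y hR', PB.pdL_y o t x y hR']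
    set u := Real.sqrt (Real.sinh o ^ 2 + Real.sin t ^ 2) with hu
    set v := Real.sqrt (x ^ 2 + y ^ 2) with hv
    have hu0 : u ≠ 0 := by rw [hu]; positivity
    have hv0 : v ≠ 0 := by rw [hv]; positivity
    have hu2 : Real.sinh o ^ 2 + Real.sin t ^ 2 = u ^ 2 := (Real.sq_sqrt hS'.le).symm
    have hv2 : x ^ 2 + y ^ 2 = v ^ 2 := (Real.sq_sqrt hR'.le).symm
    rw [hu2, hv2]
    field_simp
    ring
  refine ⟨?_, ?_, key, ?_⟩
  · intro p hp
    obtain ⟨hS, hR⟩ := pos p hp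
    exact (PB.diffH a ha.ne' p hS hR).differentiableWithinAt
  · intro p hp
    obtain ⟨hS, hR⟩ := pos p hp
    exact (PB.diffL p hR).differentiableWithinAt
  · intro c hc h1 h2 h3 h4 t0
    obtain ⟨hS, hR⟩ := pos (c t0) (hc t0)
    have hL : DifferentiableAt ℝ (fun p : ℝ × ℝ × ℝ × ℝ =>
        (-(Real.sin p.2.1 ^ 2) * p.2.2.1 ^ 2 + Real.sinh p.1 ^ 2 * p.2.2.2 ^ 2) /
          (p.2.2.1 ^ 2 + p.2.2.2 ^ 2)) (c t0) := PB.diffL (c t0) hR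
    have hcv : HasDerivAt c
        (pdOmegaStar (fun p : ℝ × ℝ × ℝ × ℝ =>
            Real.sqrt (p.2.2.1 ^ 2 + p.2.2.2 ^ 2) /
              (a * Real.sqrt (Real.sinh p.1 ^ 2 + Real.sin p.2.1 ^ 2))) (c t0),
          pdThetaStar (fun p : ℝ × ℝ × ℝ × ℝ =>
            Real.sqrt (p.2.2.1 ^ 2 + p.2.2.2 ^ 2) /
              (a * Real.sqrt (Real.sinh p.1 ^ 2 + Real.sin p.2.1 ^ 2))) (c t0),
          -pdOmega (fun p : ℝ × ℝ × ℝ × ℝ =>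
            Real.sqrt (p.2.2.1 ^ 2 + p.2.2.2 ^ 2) /
              (a * Real.sqrt (Real.sinh p.1 ^ 2 + Real.sin p.2.1 ^ 2))) (c t0),
          -pdTheta (fun p : ℝ × ℝ × ℝ × ℝ =>
            Real.sqrt (p.2.2.1 ^ 2 + p.2.2.2 ^ 2) /
              (a * Real.sqrt (Real.sinh p.1 ^ 2 + Real.sin p.2.1 ^ 2))) (c t0)) t0 :=
      (h1 t0).prodMk ((h2 t0).prodMk ((h3 t0).prodMk (h4 t0)))
    have h := hL.hasFDerivAt.comp_hasDerivAt t0 hcv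
    have hval := PB.fderiv_apply_vec _ (c t0) hL
      (pdOmegaStar (fun p : ℝ × ℝ × ℝ × ℝ =>
          Real.sqrt (p.2.2.1 ^ 2 + p.2.2.2 ^ 2) /
            (a * Real.sqrt (Real.sinh p.1 ^ 2 + Real.sin p.2.1 ^ 2))) (c t0))
      (pdThetaStar (fun p : ℝ × ℝ × ℝ × ℝ =>
          Real.sqrt (p.2.2.1 ^ 2 + p.2.2.2 ^ 2) /
            (a * Real.sqrt (Real.sinh p.1 ^ 2 + Real.sin p.2.1 ^ 2))) (c t0))
      (-pdOmega (fun p : ℝ × ℝ × ℝ × ℝ =>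
          Real.sqrt (p.2.2.1 ^ 2 + p.2.2.2 ^ 2) /
            (a * Real.sqrt (Real.sinh p.1 ^ 2 + Real.sin p.2.1 ^ 2))) (c t0))
      (-pdTheta (fun p : ℝ × ℝ × ℝ × ℝ =>
          Real.sqrt (p.2.2.1 ^ 2 + p.2.2.2 ^ 2) /
            (a * Real.sqrt (Real.sinh p.1 ^ 2 + Real.sin p.2.1 ^ 2))) (c t0))
    have hzero := key (c t0) (hc t0)
    rw [hval] at h
    have : HasDerivAt (fun s => (fun p : ℝ × ℝ × ℝ × ℝ =>
        (-(Real.sin p.2.1 ^ 2) * p.2.2.1 ^ 2 + Real.sinh p.1 ^ 2 * p.2.2.2 ^ 2) /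
          (p.2.2.1 ^ 2 + p.2.2.2 ^ 2)) (c s)) 0 t0 := by
      refine h.congr_deriv ?_
      linear_combination hzero
    exact this
end
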